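/- Let k be an algebraically closed field of characteristic 2, λ ∈ k and m ≥ 1, and let g₁ = [[I_m, 0],[I_m, I_m]] and g₂ = [[I_m, 0],[J_λ, I_m]] be the 2m × 2m block matrices defining the representation A_m(λ) of C₂ × C₂. Then the commutant algebra {M ∈ Mat_{2m}(k) : M g₁ = g₁ M and M g₂ = g₂ M}, which is the endomorphism algebra End_{kC₂²}(A_m(λ)), has dimension m² + m over k. -/
import Mathlib


/-- The `m × m` (lower-triangular) Jordan block with eigenvalue `lam`. -/
def jordanBlock (k : Type*) [CommRing k] (m : ℕ) (lam : k) : Matrix (Fin m) (Fin m) k :=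
  Matrix.of fun i j => if i = j then lam else if (i : ℕ) = (j : ℕ) + 1 then 1 else 0

/-- The block matrix `[[Iₘ, 0], [Iₘ, Iₘ]]` by which the first generator `g₁` of the Klein
four-group acts on `A_m(λ)`. -/
def kleinGenOne (k : Type*) [CommRing k] (m : ℕ) :
    Matrix (Fin m ⊕ Fin m) (Fin m ⊕ Fin m) k :=
  Matrix.fromBlocks 1 0 1 1

/-- The block matrix `[[Iₘ, 0], [J_λ, Iₘ]]` by which the second generator `g₂` of the
Klein four-group acts on `A_m(λ)`. -/
def kleinGenTwo (k : Type*) [CommRing k] (m : ℕ) (lam : k) :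
    Matrix (Fin m ⊕ Fin m) (Fin m ⊕ Fin m) k :=
  Matrix.fromBlocks 1 0 (jordanBlock k m lam) 1

open Matrix

section Aux
variable {k : Type*} [Field k] {m : ℕ}

lemma jordan0_apply (a b : Fin m) :
    jordanBlock k m 0 a b = if (a : ℕ) = (b : ℕ) + 1 then 1 else 0 := by
  simp only [jordanBlock, Matrix.of_apply]
  rcases eq_or_ne a b with rfl | h
  · simp
  · simp [h]

lemma mul_jordan0_apply (B : Matrix (Fin m) (Fin m) k) (i j : Fin m) :
    (B * jordanBlock k m 0) i j =
      if h : (j : ℕ) + 1 < m then B i ⟨(j : ℕ) + 1, h⟩ else 0 := by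
  rw [Matrix.mul_apply]
  simp only [jordan0_apply, mul_ite, mul_one, mul_zero]
  split_ifs with h
  · rw [Finset.sum_eq_single (⟨(j : ℕ) + 1, h⟩ : Fin m)]
    · simp
    · intro l _ hl
      rw [if_neg]
      intro hval
      exact hl (Fin.ext hval)
    · simp
  · apply Finset.sum_eq_zero
    intro l _
    rw [if_neg]
    intro hval
    omega
    -- l < m, l = j+1, ¬ (j+1<m)

lemma jordan0_mul_apply (B : Matrix (Fin m) (Fin m) k) (i j : Fin m) :
    (jordanBlock k m 0 * B) i j =
      if h : 1 ≤ (i : ℕ) then B ⟨(i : ℕ) - 1, by omega⟩ j else 0 := by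
  rw [Matrix.mul_apply]
  simp only [jordan0_apply, ite_mul, one_mul, zero_mul]
  split_ifs with h
  · rw [Finset.sum_eq_single (⟨(i : ℕ) - 1, by omega⟩ : Fin m)]
    · rw [if_pos (show (i : ℕ) = (i : ℕ) - 1 + 1 by omega)]
    · intro l _ hl
      rw [if_neg]
      intro hval
      exact hl (Fin.ext (show (l : ℕ) = (i : ℕ) - 1 by omega))
    · simp
  · apply Finset.sum_eq_zero
    intro l _
    rw [if_neg]
    omega

end Aux

section Aux2
variable {k : Type*} [Field k] {m : ℕ}

/-- Lower-triangular Toeplitz matrix with first column `v`. -/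
def toep (v : Fin m → k) : Matrix (Fin m) (Fin m) k :=
  Matrix.of fun i j => if h : (j : ℕ) ≤ i then
    v ⟨(i : ℕ) - j, lt_of_le_of_lt (Nat.sub_le _ _) i.isLt⟩ else 0

lemma toep_comm (v : Fin m → k) :
    toep v * jordanBlock k m 0 = jordanBlock k m 0 * toep v := by
  ext i j
  have hi := i.isLt
  have hj := j.isLt
  rw [mul_jordan0_apply, jordan0_mul_apply]
  simp only [toep, Matrix.of_apply, Fin.val_mk]
  split_ifs <;>
    first
      | rfl
      | exact congrArg v (Fin.ext (show (i:ℕ) - ((j:ℕ)+1) = (i:ℕ)-1-(j:ℕ) by omega))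
      | (exfalso; omega)

lemma toep_first_col (v : Fin m → k) (hm : 0 < m) (i : Fin m) :
    toep v i ⟨0, hm⟩ = v i := by
  simp only [toep, Matrix.of_apply]
  rw [dif_pos (Nat.zero_le _)]
  exact congrArg v (Fin.ext (Nat.sub_zero _))

lemma comm_eq_zero (A : Matrix (Fin m) (Fin m) k) (hm : 0 < m)
    (hA : A * jordanBlock k m 0 = jordanBlock k m 0 * A)
    (h0 : ∀ i, A i ⟨0, hm⟩ = 0) : A = 0 := by
  have key : ∀ n : ℕ, ∀ j : Fin m, (j : ℕ) = n → ∀ i, A i j = 0 := by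
    intro n
    induction n with
    | zero =>
      intro j hj i
      have : j = ⟨0, hm⟩ := Fin.ext hj
      rw [this]; exact h0 i
    | succ n ih =>
      intro j hj i
      have hn1 : n + 1 < m := hj ▸ j.isLt
      have hn : n < m := by omega
      have := congrFun (congrFun hA i) ⟨n, hn⟩
      rw [mul_jordan0_apply, jordan0_mul_apply] at this
      rw [dif_pos (show (⟨n, hn⟩ : Fin m).val + 1 < m from hn1)] at this
      have hj' : j = ⟨n + 1, hn1⟩ := Fin.ext hj
      rw [hj']
      rw [this]
      split_ifs with h
      · exact ih _ rfl _
      · rfl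
  ext i j
  exact key j.val j rfl i

end Aux2

section Aux3
variable {k : Type*} [Field k] {m : ℕ} (lam : k)

lemma jordan_decomp :
    jordanBlock k m lam = lam • (1 : Matrix (Fin m) (Fin m) k) + jordanBlock k m 0 := by
  ext i j
  rcases eq_or_ne i j with rfl | h
  · simp [jordanBlock, Matrix.one_apply]
  · simp [jordanBlock, Matrix.one_apply, h]

lemma comm_jordan_iff (A : Matrix (Fin m) (Fin m) k) :
    A * jordanBlock k m lam = jordanBlock k m lam * A ↔
      A * jordanBlock k m 0 = jordanBlock k m 0 * A := by
  rw [jordan_decomp lam, mul_add, add_mul, Matrix.mul_smul, Matrix.smul_mul, mul_one, one_mul]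
  exact add_right_inj _

lemma mem_commutant_iff (M : Matrix (Fin m ⊕ Fin m) (Fin m ⊕ Fin m) k) :
    (M ∈ LinearMap.ker
          (LinearMap.mulRight k (kleinGenOne k m) - LinearMap.mulLeft k (kleinGenOne k m)) ⊓
        LinearMap.ker
          (LinearMap.mulRight k (kleinGenTwo k m lam) -
            LinearMap.mulLeft k (kleinGenTwo k m lam))) ↔
      (M.toBlocks₁₂ = 0 ∧ M.toBlocks₂₂ = M.toBlocks₁₁ ∧
        M.toBlocks₁₁ * jordanBlock k m 0 = jordanBlock k m 0 * M.toBlocks₁₁) := by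
  set A := M.toBlocks₁₁ with hA
  set B := M.toBlocks₁₂ with hB
  set C := M.toBlocks₂₁ with hC
  set D := M.toBlocks₂₂ with hD
  have hM : M = fromBlocks A B C D := (fromBlocks_toBlocks M).symm
  rw [Submodule.mem_inf, LinearMap.mem_ker, LinearMap.mem_ker, LinearMap.sub_apply,
    LinearMap.sub_apply, sub_eq_zero, sub_eq_zero, LinearMap.mulRight_apply,
    LinearMap.mulLeft_apply, LinearMap.mulRight_apply, LinearMap.mulLeft_apply,
    kleinGenOne, kleinGenTwo, hM, fromBlocks_multiply, fromBlocks_multiply,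
    fromBlocks_multiply, fromBlocks_multiply, fromBlocks_inj, fromBlocks_inj]
  simp only [Matrix.mul_one, Matrix.one_mul, Matrix.mul_zero, Matrix.zero_mul,
    add_zero, zero_add]
  constructor
  · rintro ⟨⟨h1, -, h3, -⟩, ⟨-, -, h7, -⟩⟩
    have hB0 : B = 0 := by
      have := h1
      rwa [add_eq_left] at this
    have hDA : D = A := by
      apply add_left_cancel (a := C)
      rw [h3, add_comm]
    refine ⟨hB0, hDA, ?_⟩
    rw [← comm_jordan_iff lam]
    have h7' := h7
    rw [hDA, add_comm (jordanBlock k m lam * A) C] at h7'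
    exact add_left_cancel h7'
  · rintro ⟨hB0, hDA, hcomm⟩
    have hAJ : A * jordanBlock k m lam = jordanBlock k m lam * A :=
      (comm_jordan_iff lam A).mpr hcomm
    simp [hB0, hDA, hAJ, add_comm]

end Aux3


/-- Let `k` be an algebraically closed field of characteristic `2`,
`λ ∈ k` and `m ≥ 1`. The commutant algebra
`{M ∈ Mat_{2m}(k) : M g₁ = g₁ M ∧ M g₂ = g₂ M}` — i.e. the endomorphism algebra
`End_{kC₂²}(A_m(λ))`, here written as the intersection of the kernels of the linear maps
`M ↦ M gⱼ - gⱼ M` — has dimension `m² + m` over `k`. -/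
theorem commutant_finrank_eq
    (k : Type*) [Field k] [IsAlgClosed k] [CharP k 2]
    (lam : k) (m : ℕ) (hm : 1 ≤ m) :
    Module.finrank k
      ↥(LinearMap.ker
          (LinearMap.mulRight k (kleinGenOne k m) - LinearMap.mulLeft k (kleinGenOne k m)) ⊓
        LinearMap.ker
          (LinearMap.mulRight k (kleinGenTwo k m lam) -
            LinearMap.mulLeft k (kleinGenTwo k m lam))) = m ^ 2 + m := by
  set S := LinearMap.ker
          (LinearMap.mulRight k (kleinGenOne k m) - LinearMap.mulLeft k (kleinGenOne k m)) ⊓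
        LinearMap.ker
          (LinearMap.mulRight k (kleinGenTwo k m lam) -
            LinearMap.mulLeft k (kleinGenTwo k m lam)) with hS
  let Φ : S →ₗ[k] (Fin m → k) × Matrix (Fin m) (Fin m) k :=
    { toFun := fun M =>
        (fun i => (M : Matrix (Fin m ⊕ Fin m) (Fin m ⊕ Fin m) k) (Sum.inl i) (Sum.inl ⟨0, hm⟩),
         fun i j => (M : Matrix (Fin m ⊕ Fin m) (Fin m ⊕ Fin m) k) (Sum.inr i) (Sum.inl j))
      map_add' := fun x y => rfl
      map_smul' := fun c x => rfl }
  have hbij : Function.Bijective Φ := by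
    constructor
    · rw [injective_iff_map_eq_zero]
      rintro ⟨Mx, hmem⟩ hx
      obtain ⟨hB0, hDA, hcomm⟩ := (mem_commutant_iff lam Mx).mp hmem
      have h1 : ∀ i : Fin m, Mx (Sum.inl i) (Sum.inl ⟨0, hm⟩) = 0 := fun i =>
        congrFun (congrArg Prod.fst hx) i
      have h2 : ∀ i j : Fin m, Mx (Sum.inr i) (Sum.inl j) = 0 := fun i j =>
        congrFun (congrFun (congrArg Prod.snd hx) i) j
      have hA0 : Mx.toBlocks₁₁ = 0 := comm_eq_zero _ hm hcomm h1
      apply Subtype.ext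
      show Mx = 0
      ext (i | i) (j | j)
      · exact congrFun (congrFun hA0 i) j
      · exact congrFun (congrFun hB0 i) j
      · exact h2 i j
      · rw [show Mx (Sum.inr i) (Sum.inr j) = Mx.toBlocks₂₂ i j from rfl, hDA, hA0]
        rfl
    · rintro ⟨v, C⟩
      refine ⟨⟨fromBlocks (toep v) 0 C (toep v), ?_⟩, ?_⟩
      · rw [mem_commutant_iff lam]
        refine ⟨rfl, rfl, ?_⟩
        exact toep_comm v
      · refine Prod.ext ?_ ?_
        · funext i
          exact toep_first_col v hm i
        · rfl
  have := LinearEquiv.finrank_eq (LinearEquiv.ofBijective Φ hbij)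
  rw [this, Module.finrank_prod, Module.finrank_pi, Module.finrank_matrix]
  simp only [Fintype.card_fin, Module.finrank_self, mul_one]
  ring
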